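/- arXiv:1908.04458 — 3 statements merged into one kernel-verified Lean document; each statement's English description precedes it below -/
import Mathlib

section
/- Let f(t) = ∑_α c_α t^α be a power series in n complex variables convergent on a polydisk around the origin, with c_β ≠ 0 for the ≻-minimal multi-index β among those with nonzero coefficient, where ≻ is the colexicographic order. Suppose t(m) ∈ ℂⁿ is a sequence with all coordinates nonzero, t(m) → 0, and for all i < j and all positive integers p, |t_j(m)| = o(|t_i(m)|^p). Then f(t(m)) ≠ 0 for all sufficiently large m. -/
open Filter Asymptotics


private lemma summable_pi_prod {f : ℕ → ℝ} (h0 : ∀ k, 0 ≤ f k) (hf : Summable f) (n : ℕ) :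
    Summable (fun α : Fin n → ℕ => ∏ i, f (α i)) := by
  induction n with
  | zero =>
      haveI : Subsingleton (Fin 0 → ℕ) := ⟨fun a b => funext fun i => i.elim0⟩
      haveI : Finite (Fin 0 → ℕ) := Finite.of_subsingleton
      exact Summable.of_finite
  | succ n ih =>
      have h2 : Summable (fun p : ℕ × (Fin n → ℕ) => f p.1 * ∏ i, f (p.2 i)) := by
        apply Summable.mul_of_nonneg hf ih h0
        intro α
        exact Finset.prod_nonneg fun i _ => h0 _
      have h3 := (Fin.consEquiv fun _ => ℕ).symm.summable_iff.2 h2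
      refine h3.congr fun α => ?_
      simp [Function.comp, Fin.prod_univ_succ, Fin.tail]

private lemma prod_split {n : ℕ} (k : Fin n) (f : Fin n → ℝ) :
    ∏ i, f i = (∏ i ∈ Finset.univ.filter (· < k), f i) *
      (f k * ∏ i ∈ Finset.univ.filter (k < ·), f i) := by
  classical
  rw [← Finset.prod_filter_mul_prod_filter_not Finset.univ (· < k)]
  congr 1
  have hs : Finset.univ.filter (fun i => ¬ i < k) =
      insert k (Finset.univ.filter (k < ·)) := by
    ext i
    simp [not_lt, le_iff_lt_or_eq, or_comm, eq_comm]
  rw [hs, Finset.prod_insert (by simp)]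

/-- Key analytic lemma: if `f(t) = ∑_α c_α t^α` converges (absolutely) on a polydisk,
`β` is the colexicographically minimal multi-index with `c_β ≠ 0`, and `t(m) → 0` is a
sequence with nonzero coordinates whose magnitudes are superpolynomially separated
(`|t_j(m)| = o(|t_i(m)|^p)` for `i < j` and every `p ≥ 1`), then `f(t(m)) ≠ 0` for all
large `m`. -/
theorem leading_term_dominates (n : ℕ) (hn : 1 ≤ n) (c : (Fin n → ℕ) → ℂ) (r : ℝ) (hr : 0 < r)
    (hconv : ∀ t : Fin n → ℂ, (∀ i, ‖t i‖ < r) →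
      Summable (fun α : Fin n → ℕ => c α * ∏ i, t i ^ α i))
    (β : Fin n → ℕ) (hβ : c β ≠ 0)
    (hmin : ∀ α : Fin n → ℕ, c α ≠ 0 → α = β ∨
      ∃ k : Fin n, β k < α k ∧ ∀ l : Fin n, k < l → α l = β l)
    (t : ℕ → Fin n → ℂ) (ht0 : ∀ m i, t m i ≠ 0)
    (htlim : Tendsto (fun m => t m) atTop (nhds 0))
    (hsep : ∀ i j : Fin n, i < j → ∀ p : ℕ, 1 ≤ p →
      (fun m => ‖t m j‖) =o[atTop] fun m => ‖t m i‖ ^ p) :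
    ∀ᶠ m in atTop, (∑' α : Fin n → ℕ, c α * ∏ i, t m i ^ α i) ≠ 0 := by
  classical
  set ρ : ℝ := r / 2 with hρdef
  have hρ : 0 < ρ := by positivity
  have hρr : ρ < r := by rw [hρdef]; linarith
  set q : ℝ := 2 / ρ with hqdef
  have hq : 0 < q := by positivity
  have hcβ : 0 < ‖c β‖ := norm_pos_iff.mpr hβ
  -- Cauchy bound
  have hsum0 : Summable (fun α : Fin n → ℕ => c α * ∏ i, (ρ : ℂ) ^ α i) := by
    apply hconv
    intro i
    simpa [Complex.norm_real, abs_of_pos hρ] using hρr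
  have hsum0n : Summable (fun α : Fin n → ℕ => ‖c α‖ * ρ ^ (∑ i, α i)) := by
    have h := summable_norm_iff.mpr hsum0
    refine h.congr fun α => ?_
    simp [norm_mul, norm_prod, norm_pow, Complex.norm_real,
      abs_of_pos hρ, Finset.prod_pow_eq_pow_sum]
  set M : ℝ := ∑' α : Fin n → ℕ, ‖c α‖ * ρ ^ (∑ i, α i) with hMdef
  have hMb : ∀ α : Fin n → ℕ, ‖c α‖ * ρ ^ (∑ i, α i) ≤ M :=
    fun α => hsum0n.le_tsum α fun j _ => by positivity
  have hM0 : 0 < M := lt_of_lt_of_le (mul_pos hcβ (pow_pos hρ _)) (hMb β)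
  -- the geometric majorant
  have hhalf : Summable (fun j : ℕ => ((1:ℝ)/2) ^ j) :=
    summable_geometric_of_lt_one (by norm_num) (by norm_num)
  have hT : Summable (fun α : Fin n → ℕ => ∏ i, ((1:ℝ)/2) ^ α i) :=
    summable_pi_prod (fun j => by positivity) hhalf n
  set T : ℝ := ∑' α : Fin n → ℕ, ∏ i, ((1:ℝ)/2) ^ α i with hTdef
  have hT1 : (1:ℝ) ≤ T := by
    have h := hT.le_tsum (fun _ => 0) (fun j _ => Finset.prod_nonneg fun i _ => by positivity)
    simp only [pow_zero, Finset.prod_const_one] at h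
    exact h
  have hT0 : (0:ℝ) < T := lt_of_lt_of_le one_pos hT1
  set ε : ℝ := ‖c β‖ / (2 * M * T) with hεdef
  have hε0 : 0 < ε := by
    apply div_pos hcβ; positivity
  -- coordinatewise convergence to 0
  have hcoord : ∀ i, Tendsto (fun m => ‖t m i‖) atTop (nhds 0) := by
    intro i
    have h1 : Tendsto (fun m => t m i) atTop (nhds 0) := by
      have h := tendsto_pi_nhds.1 htlim i
      simpa using h
    have h2 := h1.norm
    simpa using h2
  -- eventual conditions
  have hE0 : ∀ᶠ m in atTop, ∀ i, ‖t m i‖ < r := by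
    rw [eventually_all]
    intro i
    exact (hcoord i).eventually_lt_const hr
  have hE1 : ∀ᶠ m in atTop, ∀ i, q * ‖t m i‖ ≤ 1 := by
    rw [eventually_all]
    intro i
    have h := (hcoord i).eventually_le_const (show (0:ℝ) < 1/q by positivity)
    filter_upwards [h] with m hm
    rw [← le_div_iff₀' hq]
    exact hm
  have hE2 : ∀ k : Fin n, ∀ᶠ m in atTop,
      q ^ (β k + 1 + ∑ i ∈ Finset.univ.filter (k < ·), β i) * ‖t m k‖ ≤
        ε * ∏ i ∈ Finset.univ.filter (· < k), ‖t m i‖ ^ β i := by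
    intro k
    set E := β k + 1 + ∑ i ∈ Finset.univ.filter (k < ·), β i with hE
    rcases (Finset.univ.filter (fun i : Fin n => i < k)).eq_empty_or_nonempty with he | hne
    · rw [he]
      simp only [Finset.prod_empty, mul_one]
      have h : Tendsto (fun m => q ^ E * ‖t m k‖) atTop (nhds 0) := by
        simpa using (hcoord k).const_mul (q ^ E)
      exact h.eventually_le_const hε0
    · set j := Finset.max' _ hne with hj
      have hjmem : j ∈ Finset.univ.filter (fun i : Fin n => i < k) := Finset.max'_mem _ hne
      have hjk : j < k := by simpa using hjmem
      set B := ∑ i ∈ Finset.univ.filter (fun i : Fin n => i < k), β i with hB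
      set δ : ℝ := ε / q ^ E with hδ
      have hδ0 : 0 < δ := by positivity
      have h1 : ∀ᶠ m in atTop, ‖t m k‖ ≤ δ * ‖t m j‖ ^ (B + 1) := by
        have h := (hsep j k hjk (B + 1) (Nat.le_add_left 1 B)).def hδ0
        filter_upwards [h] with m hm
        simpa [Real.norm_eq_abs, abs_of_nonneg (norm_nonneg _),
          abs_of_nonneg (pow_nonneg (norm_nonneg _) _)] using hm
      have h2 : ∀ᶠ m in atTop, ‖t m j‖ ≤ 1 :=
        (hcoord j).eventually_le_const one_pos
      have h3 : ∀ᶠ m in atTop, ∀ i ∈ Finset.univ.filter (fun i : Fin n => i < k),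
          ‖t m j‖ ≤ ‖t m i‖ := by
        rw [eventually_all_finset]
        intro i hi
        rcases eq_or_lt_of_le (Finset.le_max' _ i hi) with hij | hij
        · filter_upwards with m
          rw [hij]
        · have h := (hsep i j hij 1 le_rfl).def one_pos
          filter_upwards [h] with m hm
          simpa [Real.norm_eq_abs, abs_of_nonneg (norm_nonneg _)] using hm
      filter_upwards [h1, h2, h3] with m hm1 hm2 hm3
      have hprod : ‖t m j‖ ^ B ≤
          ∏ i ∈ Finset.univ.filter (fun i : Fin n => i < k), ‖t m i‖ ^ β i := by
        rw [hB, ← Finset.prod_pow_eq_pow_sum]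
        exact Finset.prod_le_prod (fun i _ => pow_nonneg (norm_nonneg _) _)
          (fun i hi => pow_le_pow_left₀ (norm_nonneg _) (hm3 i hi) _)
      calc q ^ E * ‖t m k‖
          ≤ q ^ E * (δ * ‖t m j‖ ^ (B + 1)) :=
            mul_le_mul_of_nonneg_left hm1 (le_of_lt (pow_pos hq E))
        _ = (q ^ E * δ) * ‖t m j‖ ^ (B + 1) := by ring
        _ = ε * (‖t m j‖ * ‖t m j‖ ^ B) := by
            have hqE : q ^ E * δ = ε := by
              rw [hδ]
              field_simp
            rw [hqE, pow_succ]
            ring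
        _ ≤ ε * (1 * ‖t m j‖ ^ B) := by
            apply mul_le_mul_of_nonneg_left _ hε0.le
            exact mul_le_mul_of_nonneg_right hm2
              (pow_nonneg (norm_nonneg _) _)
        _ = ε * ‖t m j‖ ^ B := by ring
        _ ≤ ε * ∏ i ∈ Finset.univ.filter (fun i : Fin n => i < k), ‖t m i‖ ^ β i :=
            mul_le_mul_of_nonneg_left hprod hε0.le
  have hE2' : ∀ᶠ m in atTop, ∀ k : Fin n,
      q ^ (β k + 1 + ∑ i ∈ Finset.univ.filter (k < ·), β i) * ‖t m k‖ ≤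
        ε * ∏ i ∈ Finset.univ.filter (· < k), ‖t m i‖ ^ β i :=
    eventually_all.2 hE2
  filter_upwards [hE0, hE1, hE2'] with m H0 H1 H2
  set a : Fin n → ℝ := fun i => ‖t m i‖ with ha
  have ha0 : ∀ i, 0 < a i := fun i => norm_pos_iff.mpr (ht0 m i)
  set P : ℝ := ∏ i, a i ^ β i with hP
  have hP0 : 0 < P := Finset.prod_pos fun i _ => pow_pos (ha0 i) _
  -- the key pointwise estimate
  have key : ∀ α : Fin n → ℕ, α ≠ β → c α ≠ 0 →
      ‖c α‖ * ∏ i, a i ^ α i ≤ M * ε * P * ∏ i, ((1:ℝ)/2) ^ α i := by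
    intro α hne hc
    rcases hmin α hc with h | ⟨k, hk1, hk2⟩
    · exact absurd h hne
    have hqa0 : ∀ i, (0:ℝ) ≤ q * a i := fun i => (mul_pos hq (ha0 i)).le
    have hstep3 : ∏ i, (q * a i) ^ α i ≤ ε * P := by
      rw [prod_split k (fun i => (q * a i) ^ α i)]
      have hL : (∏ i ∈ Finset.univ.filter (· < k), (q * a i) ^ α i) ≤ 1 :=
        Finset.prod_le_one (fun i _ => pow_nonneg (hqa0 i) _)
          (fun i _ => pow_le_one₀ (hqa0 i) (H1 i))
      have hk' : (q * a k) ^ α k ≤ (q * a k) ^ (β k + 1) :=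
        pow_le_pow_of_le_one (hqa0 k) (H1 k) (Nat.succ_le_of_lt hk1)
      have hG : ∏ i ∈ Finset.univ.filter (k < ·), (q * a i) ^ α i
          = ∏ i ∈ Finset.univ.filter (k < ·), (q * a i) ^ β i := by
        apply Finset.prod_congr rfl
        intro i hi
        rw [hk2 i (by simpa using hi)]
      calc (∏ i ∈ Finset.univ.filter (· < k), (q * a i) ^ α i) *
            ((q * a k) ^ α k * ∏ i ∈ Finset.univ.filter (k < ·), (q * a i) ^ α i)
          ≤ 1 * ((q * a k) ^ (β k + 1) * ∏ i ∈ Finset.univ.filter (k < ·), (q * a i) ^ β i) := by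
            rw [hG]
            apply mul_le_mul hL
              (mul_le_mul_of_nonneg_right hk'
                (Finset.prod_nonneg fun i _ => pow_nonneg (hqa0 i) _))
              (mul_nonneg (pow_nonneg (hqa0 k) _)
                (Finset.prod_nonneg fun i _ => pow_nonneg (hqa0 i) _)) one_pos.le
        _ = (q ^ (β k + 1 + ∑ i ∈ Finset.univ.filter (k < ·), β i) * a k) *
              (a k ^ β k * ∏ i ∈ Finset.univ.filter (k < ·), a i ^ β i) := by
            simp only [one_mul, mul_pow, Finset.prod_mul_distrib,
              Finset.prod_pow_eq_pow_sum, pow_add, pow_succ]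
            ring
        _ ≤ (ε * ∏ i ∈ Finset.univ.filter (· < k), a i ^ β i) *
              (a k ^ β k * ∏ i ∈ Finset.univ.filter (k < ·), a i ^ β i) :=
            mul_le_mul_of_nonneg_right (H2 k)
              (mul_nonneg (pow_nonneg (ha0 k).le _)
                (Finset.prod_nonneg fun i _ => pow_nonneg (ha0 i).le _))
        _ = ε * P := by
            rw [hP, prod_split k (fun i => a i ^ β i)]
            ring
    have e1 : ∏ i, a i ^ α i = ρ ^ (∑ i, α i) * ∏ i, (a i / ρ) ^ α i := by
      rw [← Finset.prod_pow_eq_pow_sum, ← Finset.prod_mul_distrib]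
      apply Finset.prod_congr rfl
      intro i _
      rw [← mul_pow]
      congr 1
      field_simp
    have e2 : ∏ i, (a i / ρ) ^ α i = (∏ i, ((1:ℝ)/2) ^ α i) * ∏ i, (q * a i) ^ α i := by
      rw [← Finset.prod_mul_distrib]
      apply Finset.prod_congr rfl
      intro i _
      rw [← mul_pow]
      congr 1
      rw [hqdef]
      field_simp
    calc ‖c α‖ * ∏ i, a i ^ α i
        = (‖c α‖ * ρ ^ (∑ i, α i)) *
            ((∏ i, ((1:ℝ)/2) ^ α i) * ∏ i, (q * a i) ^ α i) := by
          rw [e1, e2]; ring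
      _ ≤ M * ((∏ i, ((1:ℝ)/2) ^ α i) * (ε * P)) := by
          apply mul_le_mul (hMb α) ?_ ?_ hM0.le
          · exact mul_le_mul_of_nonneg_left hstep3
              (Finset.prod_nonneg fun i _ => by positivity)
          · exact mul_nonneg (Finset.prod_nonneg fun i _ => by positivity)
              (Finset.prod_nonneg fun i _ => pow_nonneg (hqa0 i) _)
      _ = M * ε * P * ∏ i, ((1:ℝ)/2) ^ α i := by ring
  -- assemble
  have hsm : Summable (fun α : Fin n → ℕ => c α * ∏ i, t m i ^ α i) := hconv _ H0
  rw [hsm.tsum_eq_add_tsum_ite β]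
  intro hcontra
  set S : ℂ := ∑' α : Fin n → ℕ, ite (α = β) 0 (c α * ∏ i, t m i ^ α i) with hS
  have habs : ∀ α : Fin n → ℕ, ‖c α * ∏ i, t m i ^ α i‖ = ‖c α‖ * ∏ i, a i ^ α i := by
    intro α
    simp [ha, norm_mul, norm_prod, norm_pow]
  have hbound : ∀ α : Fin n → ℕ, ‖ite (α = β) (0:ℂ) (c α * ∏ i, t m i ^ α i)‖ ≤
      (M * ε * P) * ∏ i, ((1:ℝ)/2) ^ α i := by
    intro α
    have hhp : (0:ℝ) ≤ (M * ε * P) * ∏ i, ((1:ℝ)/2) ^ α i :=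
      mul_nonneg (mul_nonneg (mul_nonneg hM0.le hε0.le) hP0.le)
        (Finset.prod_nonneg fun i _ => by positivity)
    by_cases hαβ : α = β
    · rw [if_pos hαβ, norm_zero]
      exact hhp
    · rw [if_neg hαβ]
      by_cases hc : c α = 0
      · rw [hc]
        simp only [zero_mul, norm_zero]
        exact hhp
      · rw [habs α]
        exact key α hαβ hc
  have hmaj : Summable (fun α : Fin n → ℕ => (M * ε * P) * ∏ i, ((1:ℝ)/2) ^ α i) :=
    hT.mul_left _
  have hsn : Summable (fun α : Fin n → ℕ => ‖ite (α = β) (0:ℂ) (c α * ∏ i, t m i ^ α i)‖) :=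
    Summable.of_nonneg_of_le (fun _ => norm_nonneg _) hbound hmaj
  have hnormS : ‖S‖ ≤ (M * ε * P) * T := by
    calc ‖S‖ ≤ ∑' α : Fin n → ℕ, ‖ite (α = β) (0:ℂ) (c α * ∏ i, t m i ^ α i)‖ :=
          norm_tsum_le_tsum_norm hsn
      _ ≤ ∑' α : Fin n → ℕ, (M * ε * P) * ∏ i, ((1:ℝ)/2) ^ α i :=
          Summable.tsum_le_tsum hbound hsn hmaj
      _ = (M * ε * P) * T := by rw [tsum_mul_left]
  have hSval : c β * ∏ i, t m i ^ β i = -S := by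
    rw [hS]
    linear_combination hcontra
  have hnorm_eq : ‖c β‖ * P = ‖S‖ := by
    have h := congrArg norm hSval
    rw [norm_neg] at h
    rw [← h, habs β, hP]
  have hMεT : M * ε * T = ‖c β‖ / 2 := by
    rw [hεdef]
    field_simp
  have hfin : ‖c β‖ * P ≤ ‖c β‖ / 2 * P := by
    rw [hnorm_eq]
    calc ‖S‖ ≤ (M * ε * P) * T := hnormS
      _ = (M * ε * T) * P := by ring
      _ = ‖c β‖ / 2 * P := by rw [hMεT]
  nlinarith [hP0, hcβ]
end

section
/- Let β ∈ ℕⁿ be a multi-index and let (c_α) satisfy the Cauchy bound |c_α| ≤ M/r^{|α|}. For fixed 1 ≤ i ≤ n, define S_i(t) = ∑ c_α t^α, the sum over multi-indices α with α_k = β_k for all k > i and α_i > β_i. Then for t in a small enough polydisk with all coordinates nonzero, |S_i(t)| ≤ |t_i / (t₁^{β₁}⋯t_{i-1}^{β_{i-1}})| · |t^β| · C(t), where C(t) = ∑_α |c_{α + (0,…,0,β_i+1,β_{i+1},…,β_n)} t^α| is finite and bounded near the origin. -/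
open Finset

/-- Finite sums of multi-geometric products are uniformly bounded. -/
private lemma prod_pow_sum_le {n : ℕ} (x : Fin n → ℝ) (h0 : ∀ k, 0 ≤ x k) (h1 : ∀ k, x k < 1)
    (F : Finset (Fin n → ℕ)) :
    ∑ γ ∈ F, ∏ k, x k ^ γ k ≤ ∏ k, (1 - x k)⁻¹ := by
  classical
  set N := (F.sup fun γ => Finset.univ.sup γ) + 1 with hN
  have hsub : F ⊆ Fintype.piFinset fun _ => Finset.range N := by
    intro γ hγ
    rw [Fintype.mem_piFinset]
    intro k
    rw [Finset.mem_range]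
    exact Nat.lt_succ_of_le ((Finset.le_sup (Finset.mem_univ k)).trans (Finset.le_sup hγ))
  calc ∑ γ ∈ F, ∏ k, x k ^ γ k
      ≤ ∑ γ ∈ Fintype.piFinset (fun _ => Finset.range N), ∏ k, x k ^ γ k :=
        Finset.sum_le_sum_of_subset_of_nonneg hsub
          (fun γ _ _ => Finset.prod_nonneg fun k _ => pow_nonneg (h0 k) _)
    _ = ∏ k, ∑ m ∈ Finset.range N, x k ^ m := (Finset.prod_univ_sum _ _).symm
    _ ≤ ∏ k, (1 - x k)⁻¹ := by
        refine Finset.prod_le_prod (fun k _ => Finset.sum_nonneg fun m _ => pow_nonneg (h0 k) _)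
          (fun k _ => ?_)
        rw [← tsum_geometric_of_lt_one (h0 k) (h1 k)]
        exact Summable.sum_le_tsum _ (fun m _ => pow_nonneg (h0 k) _)
          (summable_geometric_of_lt_one (h0 k) (h1 k))

/-- The re-indexing estimate: with the Cauchy bound `|c_α| ≤ M/r^{|α|}`, for fixed `i`
the partial sum `S_i(t)` over `{α : α_k = β_k for k > i, α_i > β_i}` satisfies
`|S_i(t)| ≤ |t_i / (t₁^{β₁}⋯t_{i-1}^{β_{i-1}})| · |t^β| · C(t)` on a small polydisk with
nonzero coordinates, where `C(t) = ∑_α |c_{α+σ} t^α|` (with `σ` the shift adding `β_i+1`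
at coordinate `i` and `β_k` at coordinates `k > i`) is bounded near the origin. -/
theorem reindexing_estimate (n : ℕ) (M r : ℝ) (hM : 0 < M) (hr : 0 < r)
    (c : (Fin n → ℕ) → ℂ)
    (hc : ∀ α : Fin n → ℕ, norm (c α) ≤ M / r ^ (∑ k, α k))
    (β : Fin n → ℕ) (i : Fin n) :
    ∃ δ : ℝ, 0 < δ ∧ δ ≤ r ∧
      (∀ t : Fin n → ℂ, (∀ k, t k ≠ 0) → (∀ k, norm (t k) < δ) →
        norm (∑' α : {α : Fin n → ℕ // (∀ k, i < k → α k = β k) ∧ β i < α i},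
            c α.1 * ∏ k, t k ^ α.1 k) ≤
          norm (t i) / (∏ k ∈ Finset.univ.filter (fun k => k < i),
              norm (t k) ^ β k) *
            norm (∏ k, t k ^ β k) *
            ∑' α : Fin n → ℕ,
              norm
                (c (fun k => α k + if k < i then 0 else if k = i then β i + 1 else β k) *
                  ∏ k, t k ^ α k)) ∧
      ∃ B : ℝ, ∀ t : Fin n → ℂ, (∀ k, norm (t k) < δ) →
        (∑' α : Fin n → ℕ,
            norm
              (c (fun k => α k + if k < i then 0 else if k = i then β i + 1 else β k) *
                ∏ k, t k ^ α k)) ≤ B := by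
  classical
  -- the shift and its total degree
  set σf : Fin n → ℕ := fun k => if k < i then 0 else if k = i then β i + 1 else β k with hσf
  set S : ℕ := ∑ k, σf k with hS
  set sh : (Fin n → ℕ) → (Fin n → ℕ) := fun α k => α k + σf k with hsh
  have hshsum : ∀ γ : Fin n → ℕ, (∑ k, sh γ k) = (∑ k, γ k) + S := by
    intro γ
    simp only [hsh, hS, Finset.sum_add_distrib]
  -- per-term bound and finite-sum bound for `g t`
  have hterm : ∀ t : Fin n → ℂ, (∀ k, norm (t k) < r / 2) → ∀ γ : Fin n → ℕ,
      norm (c (sh γ) * ∏ k, t k ^ γ k) ≤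
        (M / r ^ S) * ∏ k, (norm (t k) / r) ^ γ k := by
    intro t ht γ
    have hP : norm (∏ k, t k ^ γ k) = ∏ k, norm (t k) ^ γ k := by
      rw [norm_prod]
      simp [norm_pow]
    have hx : ∏ k, (norm (t k) / r) ^ γ k
        = (∏ k, norm (t k) ^ γ k) / r ^ (∑ k, γ k) := by
      rw [← Finset.prod_pow_eq_pow_sum, ← Finset.prod_div_distrib]
      simp [div_pow]
    have hPn : 0 ≤ ∏ k, norm (t k) ^ γ k :=
      Finset.prod_nonneg fun k _ => pow_nonneg (norm_nonneg _) _
    rw [norm_mul, hP]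
    calc norm (c (sh γ)) * ∏ k, norm (t k) ^ γ k
        ≤ (M / r ^ ((∑ k, γ k) + S)) * ∏ k, norm (t k) ^ γ k := by
          have := hc (sh γ)
          rw [hshsum γ] at this
          exact mul_le_mul_of_nonneg_right this hPn
      _ = (M / r ^ S) * ((∏ k, norm (t k) ^ γ k) / r ^ (∑ k, γ k)) := by
          rw [pow_add]
          ring
      _ = (M / r ^ S) * ∏ k, (norm (t k) / r) ^ γ k := by rw [hx]
  have hx0 : ∀ t : Fin n → ℂ, ∀ k, (0 : ℝ) ≤ norm (t k) / r :=
    fun t k => div_nonneg (norm_nonneg _) hr.le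
  have hx1 : ∀ t : Fin n → ℂ, (∀ k, norm (t k) < r / 2) →
      ∀ k, norm (t k) / r < 1 / 2 := by
    intro t ht k
    rw [div_lt_div_iff₀ hr (by norm_num)]
    linarith [ht k]
  have hFbound : ∀ t : Fin n → ℂ, (∀ k, norm (t k) < r / 2) →
      ∀ F : Finset (Fin n → ℕ),
        ∑ γ ∈ F, norm (c (sh γ) * ∏ k, t k ^ γ k) ≤ (M / r ^ S) * 2 ^ n := by
    intro t ht F
    have h1 : ∀ k, norm (t k) / r < 1 := fun k => (hx1 t ht k).trans (by norm_num)
    calc ∑ γ ∈ F, norm (c (sh γ) * ∏ k, t k ^ γ k)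
        ≤ ∑ γ ∈ F, (M / r ^ S) * ∏ k, (norm (t k) / r) ^ γ k :=
          Finset.sum_le_sum fun γ _ => hterm t ht γ
      _ = (M / r ^ S) * ∑ γ ∈ F, ∏ k, (norm (t k) / r) ^ γ k := by
          rw [Finset.mul_sum]
      _ ≤ (M / r ^ S) * ∏ k, (1 - norm (t k) / r)⁻¹ := by
          refine mul_le_mul_of_nonneg_left ?_ (le_of_lt (div_pos hM (pow_pos hr S)))
          exact prod_pow_sum_le _ (hx0 t) h1 F
      _ ≤ (M / r ^ S) * 2 ^ n := by
          refine mul_le_mul_of_nonneg_left ?_ (le_of_lt (div_pos hM (pow_pos hr S)))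
          calc ∏ k : Fin n, (1 - norm (t k) / r)⁻¹
              ≤ ∏ _k : Fin n, (2 : ℝ) := by
                refine Finset.prod_le_prod (fun k _ => ?_) (fun k _ => ?_)
                · have := hx1 t ht k
                  exact inv_nonneg.mpr (by linarith)
                · rw [inv_le_comm₀ (by have := hx1 t ht k; linarith) (by norm_num)]
                  have := hx1 t ht k; linarith
            _ = 2 ^ n := by simp
  have hSummable : ∀ t : Fin n → ℂ, (∀ k, norm (t k) < r / 2) →
      Summable (fun γ : Fin n → ℕ => norm (c (sh γ) * ∏ k, t k ^ γ k)) :=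
    fun t ht => summable_of_sum_le (fun γ => norm_nonneg _) (hFbound t ht)
  refine ⟨r / 2, by positivity, by linarith, ?_, ?_⟩
  · -- main estimate
    intro t htne ht
    -- the injection from the index subtype into all multi-indices
    set A := {α : Fin n → ℕ // (∀ k, i < k → α k = β k) ∧ β i < α i} with hA
    set e : A → (Fin n → ℕ) :=
      fun α k => if k < i then α.1 k else if k = i then α.1 i - (β i + 1) else 0 with he
    have hshe : ∀ α : A, sh (e α) = α.1 := by
      intro α
      funext k
      simp only [hsh, he, hσf]
      rcases lt_trichotomy k i with h | h | h
      · simp [h]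
      · subst h
        simp only [lt_irrefl, if_neg (lt_irrefl k), if_pos rfl, ite_false]
        exact Nat.sub_add_cancel α.2.2
      · have h1 : ¬ k < i := not_lt_of_gt h
        have h2 : k ≠ i := ne_of_gt h
        simp only [if_neg h1, if_neg h2, zero_add]
        exact (α.2.1 k h).symm
    have heinj : Function.Injective e := by
      intro a b hab
      have : sh (e a) = sh (e b) := by rw [hab]
      rw [hshe a, hshe b] at this
      exact Subtype.ext this
    set P0 : ℝ := ∏ k, norm (t k) ^ σf k with hP0
    have hP0n : 0 ≤ P0 := Finset.prod_nonneg fun k _ => pow_nonneg (norm_nonneg _) _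
    have hnorm : ∀ α : A,
        norm (c α.1 * ∏ k, t k ^ α.1 k)
          = P0 * norm (c (sh (e α)) * ∏ k, t k ^ (e α) k) := by
      intro α
      rw [hshe α]
      rw [norm_mul, norm_mul, norm_prod, norm_prod]
      simp only [norm_pow]
      have hsplit : ∀ k, norm (t k) ^ α.1 k
          = norm (t k) ^ σf k * norm (t k) ^ (e α) k := by
        intro k
        rw [← pow_add]
        congr 1
        have : sh (e α) = α.1 := hshe α
        have := congrFun this k
        simp only [hsh] at this
        omega
      rw [Finset.prod_congr rfl fun k _ => hsplit k, Finset.prod_mul_distrib]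
      ring
    have hg := hSummable t ht
    have hge : Summable (fun α : A => norm (c (sh (e α)) * ∏ k, t k ^ (e α) k)) :=
      hg.comp_injective heinj
    have hfs : Summable (fun α : A => norm (c α.1 * ∏ k, t k ^ α.1 k)) := by
      simpa only [fun α : A => hnorm α] using hge.mul_left P0
    have step1 : norm (∑' α : A, c α.1 * ∏ k, t k ^ α.1 k)
        ≤ ∑' α : A, norm (c α.1 * ∏ k, t k ^ α.1 k) := by
      have := norm_tsum_le_tsum_norm (f := fun α : A => c α.1 * ∏ k, t k ^ α.1 k)
        (by simpa only using hfs)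
      exact this
    have step2 : ∑' α : A, norm (c α.1 * ∏ k, t k ^ α.1 k)
        ≤ P0 * ∑' γ : Fin n → ℕ, norm (c (sh γ) * ∏ k, t k ^ γ k) := by
      calc ∑' α : A, norm (c α.1 * ∏ k, t k ^ α.1 k)
          = P0 * ∑' α : A, norm (c (sh (e α)) * ∏ k, t k ^ (e α) k) := by
            rw [← tsum_mul_left]
            exact tsum_congr hnorm
        _ ≤ P0 * ∑' γ : Fin n → ℕ, norm (c (sh γ) * ∏ k, t k ^ γ k) := by
            refine mul_le_mul_of_nonneg_left ?_ hP0n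
            exact Summable.tsum_le_tsum_of_inj e heinj (fun γ _ => norm_nonneg _)
              (fun α => le_rfl) hge hg
    -- identify the prefactor
    have hpre : norm (t i) / (∏ k ∈ Finset.univ.filter (fun k => k < i),
        norm (t k) ^ β k) * norm (∏ k, t k ^ β k) = P0 := by
      have habs : norm (∏ k, t k ^ β k) = ∏ k, norm (t k) ^ β k := by
        rw [norm_prod]; simp [norm_pow]
      have hQpos : 0 < ∏ k ∈ Finset.univ.filter (fun k => k < i), norm (t k) ^ β k :=
        Finset.prod_pos fun k _ => pow_pos (norm_pos_iff.mpr (htne k)) _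
      have hsplitβ : ∏ k, norm (t k) ^ β k
          = (∏ k ∈ Finset.univ.filter (fun k => k < i), norm (t k) ^ β k)
            * ∏ k ∈ Finset.univ.filter (fun k => ¬ k < i), norm (t k) ^ β k :=
        (Finset.prod_filter_mul_prod_filter_not Finset.univ _ _).symm
      have hsplitσ : P0
          = (∏ k ∈ Finset.univ.filter (fun k => k < i), norm (t k) ^ σf k)
            * ∏ k ∈ Finset.univ.filter (fun k => ¬ k < i), norm (t k) ^ σf k :=
        (Finset.prod_filter_mul_prod_filter_not Finset.univ _ _).symm
      have hlt1 : ∏ k ∈ Finset.univ.filter (fun k => k < i), norm (t k) ^ σf k = 1 := by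
        refine Finset.prod_eq_one fun k hk => ?_
        rw [Finset.mem_filter] at hk
        simp [hσf, hk.2]
      have himem : i ∈ Finset.univ.filter (fun k : Fin n => ¬ k < i) := by
        simp [Finset.mem_filter]
      have hσsplit : ∏ k ∈ Finset.univ.filter (fun k => ¬ k < i), norm (t k) ^ σf k
          = norm (t i)
            * ∏ k ∈ Finset.univ.filter (fun k => ¬ k < i), norm (t k) ^ β k := by
        rw [← Finset.mul_prod_erase _ _ himem, ← Finset.mul_prod_erase _ _ himem]
        have hσi : σf i = β i + 1 := by simp [hσf]
        have hother : ∀ k ∈ (Finset.univ.filter (fun k : Fin n => ¬ k < i)).erase i,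
            norm (t k) ^ σf k = norm (t k) ^ β k := by
          intro k hk
          rw [Finset.mem_erase] at hk
          have h1 : ¬ k < i := by
            have := hk.2; rw [Finset.mem_filter] at this; exact this.2
          simp [hσf, h1, hk.1]
        rw [Finset.prod_congr rfl hother, hσi, pow_succ]
        ring
      rw [habs, hsplitβ, hsplitσ, hlt1, hσsplit, one_mul]
      field_simp
    calc norm (∑' α : A, c α.1 * ∏ k, t k ^ α.1 k)
        ≤ P0 * ∑' γ : Fin n → ℕ, norm (c (sh γ) * ∏ k, t k ^ γ k) :=
          step1.trans step2
      _ = norm (t i) / (∏ k ∈ Finset.univ.filter (fun k => k < i),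
            norm (t k) ^ β k) * norm (∏ k, t k ^ β k)
            * ∑' γ : Fin n → ℕ, norm (c (sh γ) * ∏ k, t k ^ γ k) := by rw [hpre]
  · -- uniform bound near the origin
    refine ⟨(M / r ^ S) * 2 ^ n, fun t ht => ?_⟩
    exact Summable.tsum_le_of_sum_le (hSummable t ht) (hFbound t ht)
end

section
/- Let n ≥ 1 and suppose t(m) ∈ ℂⁿ is a sequence with all coordinates nonzero such that for all i < j and every positive integer p, |t_j(m)| = o(|t_i(m)|^p), and |t_1(m)| → 0. Then for any fixed multi-indices α ≻ β (colexicographic order), |t(m)^α| = o(|t(m)^β|) as m → ∞. -/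
open Filter Asymptotics

/-- If the coordinates of a sequence `t(m) ∈ ℂⁿ` are nonzero, superpolynomially
separated (`|t_j(m)| = o(|t_i(m)|^p)` for `i < j`, `p ≥ 1`) and `|t_1(m)| → 0`, then
for multi-indices `α ≻ β` in the colexicographic order, `|t(m)^α| = o(|t(m)^β|)`. -/
theorem monomial_domination (n : ℕ) (hn : 0 < n) (t : ℕ → Fin n → ℂ)
    (ht0 : ∀ m i, t m i ≠ 0)
    (hsep : ∀ i j : Fin n, i < j → ∀ p : ℕ, 1 ≤ p →
      (fun m => ‖t m j‖) =o[atTop] fun m => ‖t m i‖ ^ p)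
    (hfirst : Tendsto (fun m => ‖t m ⟨0, hn⟩‖) atTop (nhds 0)) :
    ∀ α β : Fin n → ℕ,
      (∃ k : Fin n, β k < α k ∧ ∀ l : Fin n, k < l → α l = β l) →
      (fun m => ‖∏ i, t m i ^ α i‖) =o[atTop]
        fun m => ‖∏ i, t m i ^ β i‖ := by
  -- abbreviation for the absolute values
  set u : Fin n → ℕ → ℝ := fun i m => ‖t m i‖ with hu
  have hupos : ∀ i m, 0 < u i m := fun i m => by
    simpa [hu] using (norm_pos_iff.mpr (ht0 m i))
  -- every coordinate tends to 0
  have htend : ∀ i, Tendsto (u i) atTop (nhds 0) := by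
    intro i
    rcases eq_or_lt_of_le (show (⟨0, hn⟩ : Fin n) ≤ i from by
      simp [Fin.le_def]) with h | h
    · rw [← h]; exact hfirst
    · have h2 := (hsep ⟨0, hn⟩ i h 1 le_rfl)
      simp only [pow_one] at h2
      exact h2.isBigO.trans_tendsto hfirst
  -- eventually all coordinates are ≤ 1
  have h1 : ∀ᶠ m in atTop, ∀ i, u i m ≤ 1 :=
    eventually_all.2 fun i => ((htend i).eventually_le_const one_pos)
  rintro α β ⟨k, hk, heq⟩
  rw [isLittleO_iff]
  intro ε hε
  -- the key estimate : eventually `u k ≤ ε * ∏_{i<k} u i ^ β i`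
  have hd : ∀ᶠ m in atTop, u k m ≤ ε * ∏ i ∈ Finset.Iio k, u i m ^ β i := by
    rcases Nat.eq_zero_or_eq_succ_pred k.val with h0 | hsucc
    · have hempty : Finset.Iio k = ∅ := by
        ext i; simp only [Finset.mem_Iio, Finset.notMem_empty, iff_false, Fin.lt_def]
        omega
      rw [hempty]
      simpa using (htend k).eventually_le_const hε
    · -- k = j+1 ; let j' be the predecessor of k
      set j : ℕ := k.val - 1 with hj
      have hjn : j < n := lt_trans (by omega) k.isLt
      set j' : Fin n := ⟨j, hjn⟩ with hj'
      have hjk : j' < k := by simp [Fin.lt_def, hj']; omega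
      set c : ℕ := (Finset.Iio j').card with hc
      -- eventually `u j' ≤ u i ^ (β i + 1)` for every `i < j'`
      have hd1 : ∀ᶠ m in atTop, ∀ i ∈ Finset.Iio j', u j' m ≤ u i m ^ (β i + 1) := by
        rw [Filter.eventually_all_finset]
        intro i hi
        have hij : i < j' := Finset.mem_Iio.1 hi
        have := (hsep i j' hij (β i + 1) (by omega)).def one_pos
        filter_upwards [this] with m hm
        have h1' : ‖‖t m j'‖‖ = u j' m := by
          simp [hu, Real.norm_eq_abs, abs_of_nonneg (norm_nonneg _)]
        have h2' : ‖‖t m i‖ ^ (β i + 1)‖ = u i m ^ (β i + 1) := by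
          simp [hu, Real.norm_eq_abs, abs_of_nonneg (pow_nonneg (norm_nonneg _) _)]
        rw [h1', h2', one_mul] at hm
        exact hm
      -- eventually `u k ≤ ε * u j' ^ (β j' + c + 1)`
      have hd2 : ∀ᶠ m in atTop, u k m ≤ ε * u j' m ^ (β j' + c + 1) := by
        have := (hsep j' k hjk (β j' + c + 1) (by omega)).def hε
        filter_upwards [this] with m hm
        have h1' : ‖‖t m k‖‖ = u k m := by
          simp [hu, Real.norm_eq_abs, abs_of_nonneg (norm_nonneg _)]
        have h2' : ‖‖t m j'‖ ^ (β j' + c + 1)‖ = u j' m ^ (β j' + c + 1) := by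
          simp [hu, Real.norm_eq_abs, abs_of_nonneg (pow_nonneg (norm_nonneg _) _)]
        rw [h1', h2'] at hm
        exact hm
      filter_upwards [h1, hd1, hd2] with m hm1 hmd1 hmd2
      have hIic : Finset.Iic j' = Finset.Iio k := by
        ext i; simp only [Finset.mem_Iic, Finset.mem_Iio, Fin.le_def, Fin.lt_def, hj']
        omega
      have key : u j' m ^ (β j' + c + 1) ≤ ∏ i ∈ Finset.Iio k, u i m ^ β i := by
        have hstep1 : u j' m ^ (β j' + c + 1) ≤ u j' m ^ (c + β j') :=
          pow_le_pow_of_le_one (hupos j' m).le (hm1 j') (by omega)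
        have hstep2 : u j' m ^ c ≤ ∏ i ∈ Finset.Iio j', u i m ^ β i := by
          rw [hc, ← Finset.prod_const]
          refine Finset.prod_le_prod (fun i _ => (hupos j' m).le) (fun i hi => ?_)
          calc u j' m ≤ u i m ^ (β i + 1) := hmd1 i hi
            _ ≤ u i m ^ β i :=
              pow_le_pow_of_le_one (hupos i m).le (hm1 i) (by omega)
        calc u j' m ^ (β j' + c + 1) ≤ u j' m ^ (c + β j') := hstep1
          _ = u j' m ^ c * u j' m ^ β j' := by rw [pow_add]
          _ ≤ (∏ i ∈ Finset.Iio j', u i m ^ β i) * u j' m ^ β j' :=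
              mul_le_mul_of_nonneg_right hstep2 (pow_nonneg (hupos j' m).le _)
          _ = ∏ i ∈ Finset.Iic j', u i m ^ β i :=
              Finset.prod_Iio_mul_eq_prod_Iic j'
          _ = ∏ i ∈ Finset.Iio k, u i m ^ β i := by rw [hIic]
      calc u k m ≤ ε * u j' m ^ (β j' + c + 1) := hmd2
        _ ≤ ε * ∏ i ∈ Finset.Iio k, u i m ^ β i :=
            mul_le_mul_of_nonneg_left key hε.le
  -- now combine everything
  filter_upwards [h1, hd] with m hm1 hmd
  -- rewrite the absolute value of the products
  have habs : ∀ γ : Fin n → ℕ,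
      ‖∏ i, t m i ^ γ i‖ = ∏ i, u i m ^ γ i := by
    intro γ
    rw [norm_prod]
    exact Finset.prod_congr rfl fun i _ => norm_pow _ _
  have hsplit : ∀ γ : Fin n → ℕ,
      (∏ i, u i m ^ γ i) =
        (∏ i ∈ Finset.Iio k, u i m ^ γ i) * u k m ^ γ k *
          ∏ i ∈ Finset.Ioi k, u i m ^ γ i := by
    intro γ
    have hcompl : (Finset.Iic k)ᶜ = Finset.Ioi k := by
      ext i; simp [not_le]
    rw [← Finset.prod_mul_prod_compl (Finset.Iic k) (fun i => u i m ^ γ i), hcompl,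
      ← Finset.prod_Iio_mul_eq_prod_Iic k]
  have hT : (∏ i ∈ Finset.Ioi k, u i m ^ α i) = ∏ i ∈ Finset.Ioi k, u i m ^ β i :=
    Finset.prod_congr rfl fun i hi => by rw [heq i (Finset.mem_Ioi.1 hi)]
  rw [Real.norm_eq_abs, Real.norm_eq_abs, abs_of_nonneg (norm_nonneg _),
    abs_of_nonneg (norm_nonneg _), habs, habs, hsplit, hsplit, hT]
  set A : ℝ := ∏ i ∈ Finset.Iio k, u i m ^ α i with hA
  set B : ℝ := ∏ i ∈ Finset.Iio k, u i m ^ β i with hB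
  set T : ℝ := ∏ i ∈ Finset.Ioi k, u i m ^ β i with hTT
  have hA1 : A ≤ 1 :=
    Finset.prod_le_one (fun i _ => pow_nonneg (hupos i m).le _)
      (fun i _ => pow_le_one₀ (hupos i m).le (hm1 i))
  have hApos : 0 ≤ A := Finset.prod_nonneg fun i _ => pow_nonneg (hupos i m).le _
  have hBpos : 0 ≤ B := Finset.prod_nonneg fun i _ => pow_nonneg (hupos i m).le _
  have hTpos : 0 ≤ T := Finset.prod_nonneg fun i _ => pow_nonneg (hupos i m).le _
  have hpow : u k m ^ α k ≤ u k m ^ β k * u k m := by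
    calc u k m ^ α k ≤ u k m ^ (β k + 1) :=
          pow_le_pow_of_le_one (hupos k m).le (hm1 k) (by omega)
      _ = u k m ^ β k * u k m := by rw [pow_succ]
  calc A * u k m ^ α k * T ≤ 1 * (u k m ^ β k * (ε * B)) * T := by
        refine mul_le_mul_of_nonneg_right ?_ hTpos
        refine mul_le_mul hA1 ?_ (pow_nonneg (hupos k m).le _) one_pos.le
        calc u k m ^ α k ≤ u k m ^ β k * u k m := hpow
          _ ≤ u k m ^ β k * (ε * B) :=
              mul_le_mul_of_nonneg_left hmd (pow_nonneg (hupos k m).le _)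
    _ = ε * (B * u k m ^ β k * T) := by ring
end
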